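/- Suppose char R = 4, N is an abelian index-2 subgroup of G, G has a unique nonidentity commutator s, x* = sx for x ∉ N, and n* = a⁻¹na for n ∈ N and a ∉ N, with σ : G → {±1} having kernel N. Then the symmetric elements (RG)⁺ under the oriented involution ♯ commute. -/

import Mathlib

/-- The oriented involution on the group ring. -/
noncomputable def orientedSharp {R : Type*} [CommRing R] {G : Type*} [Group G]
    (st : G → G) (σ : G →* ℤˣ) (α : MonoidAlgebra R G) : MonoidAlgebra R G :=
  Finsupp.sum α.coeff fun g r => MonoidAlgebra.single (st g) (((σ g : ℤ) : R) * r)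

open scoped commutatorElement

/-- if `char R = 4`, `N = ker σ` is abelian of index 2, `G` has
a unique nonidentity commutator `s`, `x* = sx` for `x ∉ N`, and `n* = a⁻¹na`
for `n ∈ N`, `a ∉ N`, then the symmetric elements of `RG` commute. -/
theorem symmetric_commute_case_two {R : Type*} [CommRing R] {G : Type*} [Group G]
    (hchar : ringChar R = 4)
    (s : G) (hs1 : s ≠ 1)
    (hex : ∃ g h : G, ⁅g, h⁆ = s)
    (huniq : ∀ g h : G, ⁅g, h⁆ = 1 ∨ ⁅g, h⁆ = s)
    (σ : G →* ℤˣ) (hidx : σ.ker.index = 2)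
    (hab : ∀ n ∈ σ.ker, ∀ m ∈ σ.ker, n * m = m * n)
    (st : G → G)
    (hout : ∀ x : G, x ∉ σ.ker → st x = s * x)
    (hin : ∀ n ∈ σ.ker, ∀ a : G, a ∉ σ.ker → st n = a⁻¹ * n * a) :
    ∀ α β : MonoidAlgebra R G,
      orientedSharp st σ α = α → orientedSharp st σ β = β → α * β = β * α := by
  classical
  intro α β hα hβ
  -- characteristic facts
  have h4 : (4 : R) = 0 := by
    have := ringChar.Nat.cast_ringChar (R := R)
    rw [hchar] at this; exact_mod_cast this
  have h2 : (2 : R) = -2 := by linear_combination h4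
  -- group facts
  have hs2 : s * s = 1 := by
    obtain ⟨g₀, h₀, hg₀⟩ := hex
    rcases huniq h₀ g₀ with h | h
    · exfalso
      rw [commutatorElement_eq_one_iff_mul_comm] at h
      apply hs1
      rw [← hg₀, commutatorElement_eq_one_iff_mul_comm, h]
    · have hinv : ⁅h₀, g₀⁆ = s⁻¹ := by rw [← hg₀]; exact (commutatorElement_inv g₀ h₀).symm
      rw [hinv] at h
      have : s * s = s * s⁻¹ := by rw [h]
      simpa using this
  have hcen : ∀ g : G, s * g = g * s := by
    intro g
    rcases huniq s g with h | h
    · rwa [commutatorElement_eq_one_iff_mul_comm] at h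
    · exfalso
      apply hs1
      rw [commutatorElement_def] at h
      rw [← inv_eq_one]
      calc s⁻¹ = g⁻¹ * (s⁻¹ * (s * g * s⁻¹ * g⁻¹)) * g := by group
        _ = g⁻¹ * (s⁻¹ * s) * g := by rw [h]
        _ = 1 := by group
  have hσs : s ∈ σ.ker := by
    obtain ⟨g₀, h₀, hg₀⟩ := hex
    rw [MonoidHom.mem_ker, ← hg₀, commutatorElement_def]
    have : ∀ u v : ℤˣ, u * v * u * v = 1 := by decide
    simp [map_mul, map_inv, this]
  obtain ⟨a₀, ha₀⟩ : ∃ a : G, a ∉ σ.ker := by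
    by_contra hc
    push_neg at hc
    have : σ.ker = ⊤ := by rwa [Subgroup.eq_top_iff']
    rw [← Subgroup.index_eq_one] at this
    omega
  have hsqker : ∀ x : G, x * x ∈ σ.ker := by
    intro x
    rw [MonoidHom.mem_ker, map_mul]
    rcases Int.units_eq_one_or (σ x) with h | h <;> rw [h] <;> rfl
  have hker_st : ∀ n ∈ σ.ker, st n ∈ σ.ker := by
    intro n hn
    rw [hin n hn a₀ ha₀, MonoidHom.mem_ker]
    simp [map_mul, map_inv, MonoidHom.mem_ker.mp hn]
  have hnot_st : ∀ x : G, x ∉ σ.ker → st x ∉ σ.ker := by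
    intro x hx
    rw [hout x hx, MonoidHom.mem_ker, map_mul, MonoidHom.mem_ker.mp hσs, one_mul]
    exact hx
  have hσst : ∀ g : G, σ (st g) = σ g := by
    intro g
    by_cases hg : g ∈ σ.ker
    · rw [MonoidHom.mem_ker.mp (hker_st g hg), MonoidHom.mem_ker.mp hg]
    · rw [hout g hg, map_mul, MonoidHom.mem_ker.mp hσs, one_mul]
  have hstst : ∀ g : G, st (st g) = g := by
    intro g
    by_cases hg : g ∈ σ.ker
    · have h1 : a₀⁻¹ * g * a₀ ∈ σ.ker := by rw [← hin g hg a₀ ha₀]; exact hker_st g hg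
      rw [hin g hg a₀ ha₀, hin _ h1 a₀ ha₀]
      have := hab g hg (a₀ * a₀) (hsqker a₀)
      calc a₀⁻¹ * (a₀⁻¹ * g * a₀) * a₀ = a₀⁻¹ * a₀⁻¹ * (g * (a₀ * a₀)) := by group
        _ = a₀⁻¹ * a₀⁻¹ * ((a₀ * a₀) * g) := by rw [this]
        _ = g := by group
    · have h1 : s * g ∉ σ.ker := by rw [← hout g hg]; exact hnot_st g hg
      rw [hout g hg, hout _ h1, ← mul_assoc, hs2, one_mul]
  have hstinj : Function.Injective st := Function.LeftInverse.injective hstst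
  have hfix_ker : ∀ g : G, st g = g → g ∈ σ.ker := by
    intro g hg
    by_contra hc
    rw [hout g hc] at hg
    exact hs1 (mul_eq_right.mp hg)
  have hxn : ∀ n ∈ σ.ker, ∀ x : G, x ∉ σ.ker → x * st n = n * x := by
    intro n hn x hx
    rw [hin n hn x hx]
    group
  have hxn' : ∀ n ∈ σ.ker, ∀ x : G, x ∉ σ.ker → x * n = st n * x := by
    intro n hn x hx
    have := hxn (st n) (hker_st n hn) x hx
    rwa [hstst] at this
  -- sharp lemmas
  have hsharp_single : ∀ (g : G) (r : R),
      orientedSharp st σ (MonoidAlgebra.single g r)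
        = MonoidAlgebra.single (st g) (((σ g : ℤ) : R) * r) := by
    intro g r
    unfold orientedSharp
    rw [MonoidAlgebra.coeff_single, Finsupp.sum_single_index]
    simp
  have hsharp_add : ∀ a b : MonoidAlgebra R G,
      orientedSharp st σ (a + b) = orientedSharp st σ a + orientedSharp st σ b := by
    intro a b
    unfold orientedSharp
    apply Finsupp.sum_add_index
    · intro g _; simp
    · intro g _ r t; rw [mul_add]; simp
  have hcoeff : ∀ γ : MonoidAlgebra R G, orientedSharp st σ γ = γ →
      ∀ g : G, γ.coeff (st g) = ((σ g : ℤ) : R) * γ.coeff g := by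
    intro γ hγ g
    conv_lhs => rw [← hγ]
    unfold orientedSharp
    rw [MonoidAlgebra.coeff_finsuppSum, Finsupp.sum_apply]
    have : (γ.coeff.sum fun h r => (MonoidAlgebra.single (st h) (((σ h : ℤ) : R) * r)).coeff (st g))
        = γ.coeff.sum fun h r => if h = g then ((σ h : ℤ) : R) * r else 0 := by
      apply Finsupp.sum_congr
      intro h _
      rw [MonoidAlgebra.single_apply]
      congr 1
      simp only [eq_iff_iff]
      exact ⟨fun e => hstinj e, fun e => by rw [e]⟩
    rw [this, Finsupp.sum_ite_eq']
    split_ifs with hmem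
    · rfl
    · rw [Finsupp.notMem_support_iff.mp hmem, mul_zero]
  -- the generators
  set cf : G → R := fun g => if st g = g then 0 else ((σ g : ℤ) : R) with hcf
  set w : G → MonoidAlgebra R G :=
    fun g => MonoidAlgebra.single g 1 + MonoidAlgebra.single (st g) (cf g) with hw
  have hσR1 : ∀ n ∈ σ.ker, ((σ n : ℤ) : R) = 1 := by
    intro n hn; rw [MonoidHom.mem_ker.mp hn]; norm_num
  have hσRx : ∀ x : G, x ∉ σ.ker → ((σ x : ℤ) : R) = -1 := by
    intro x hx
    rcases Int.units_eq_one_or (σ x) with h | h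
    · exact absurd h hx
    · rw [h]; norm_num
  have hwsym : ∀ (g : G) (c : R),
      orientedSharp st σ (MonoidAlgebra.single g c + MonoidAlgebra.single (st g) (c * cf g))
        = MonoidAlgebra.single g c + MonoidAlgebra.single (st g) (c * cf g) := by
    intro g c
    rw [hsharp_add, hsharp_single, hsharp_single, hstst, hσst]
    by_cases hfix : st g = g
    · have h1 : ((σ g : ℤ) : R) = 1 := hσR1 g (hfix_ker g hfix)
      simp [hcf, hfix, h1]
    · have hsq : ((σ g : ℤ) : R) * ((σ g : ℤ) : R) = 1 := by
        rcases Int.units_eq_one_or (σ g) with h | h <;> rw [h] <;> norm_num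
      simp only [hcf, if_neg hfix]
      rw [add_comm]
      congr 1
      · congr 1; linear_combination c * hsq
      · congr 1; ring
  -- span of generators
  have hspan : ∀ γ : MonoidAlgebra R G, orientedSharp st σ γ = γ →
      γ ∈ Submodule.span R (Set.range w) := by
    intro γ hγ
    generalize hn : γ.coeff.support.card = n
    induction n using Nat.strong_induction_on generalizing γ with
    | _ n ih =>
      by_cases h0 : γ = 0
      · rw [h0]; exact Submodule.zero_mem _
      · obtain ⟨g, hg⟩ := Finsupp.support_nonempty_iff.mpr (mt MonoidAlgebra.coeff_eq_zero.mp h0)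
        set c : R := γ.coeff g with hc
        set δ : MonoidAlgebra R G := γ - c • w g with hδ
        have hcw : c • w g = MonoidAlgebra.single g c
            + MonoidAlgebra.single (st g) (c * cf g) := by
          rw [hw]
          rw [smul_add, MonoidAlgebra.smul_single, MonoidAlgebra.smul_single, smul_eq_mul,
            smul_eq_mul, mul_one]
        have hγδ : γ = δ + c • w g := by rw [hδ]; abel
        have hδsym : orientedSharp st σ δ = δ := by
          have he := hsharp_add δ (c • w g)
          rw [← hγδ, hγ, hcw, hwsym] at he
          have he2 : δ + (MonoidAlgebra.single g c
              + MonoidAlgebra.single (st g) (c * cf g)) = γ := by rw [hγδ, hcw]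
          rw [← he2] at he
          exact (add_right_cancel he).symm
        have hval : ∀ h : G, δ.coeff h = γ.coeff h - ((MonoidAlgebra.single g c).coeff h
            + (MonoidAlgebra.single (st g) (c * cf g)).coeff h) := by
          intro h
          rw [hδ, hcw]
          rw [MonoidAlgebra.coeff_sub, MonoidAlgebra.coeff_add, Finsupp.sub_apply, Finsupp.add_apply]
        have hδg : δ.coeff g = 0 := by
          rw [hval g]
          by_cases hfix : st g = g
          · simp [Finsupp.single_apply, hfix, hcf, hc]
          · simp [Finsupp.single_apply, hfix, hc]
        have hδstg : δ.coeff (st g) = 0 := by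
          by_cases hfix : st g = g
          · rw [hfix]; exact hδg
          · rw [hval (st g)]
            have e1 : (MonoidAlgebra.single g c).coeff (st g) = 0 := by
              rw [MonoidAlgebra.single_apply, if_neg (fun e => hfix e.symm)]
            have e2 : (MonoidAlgebra.single (st g) (c * cf g)).coeff (st g) = c * cf g := by
              rw [MonoidAlgebra.single_apply, if_pos rfl]
            rw [e1, e2, hcoeff γ hγ g]
            simp only [hcf, if_neg hfix]
            rw [← hc]
            ring
        have hsupp : δ.coeff.support ⊆ γ.coeff.support.erase g := by
          intro h hh
          rw [Finsupp.mem_support_iff] at hh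
          rcases eq_or_ne h g with rfl | hg1
          · exact absurd hδg hh
          rcases eq_or_ne h (st g) with rfl | hg2
          · exact absurd hδstg hh
          have heq : δ.coeff h = γ.coeff h := by
            rw [hval h, MonoidAlgebra.single_apply, MonoidAlgebra.single_apply,
              if_neg (fun e => hg1 e.symm), if_neg (fun e => hg2 e.symm)]
            ring
          rw [Finset.mem_erase]
          exact ⟨hg1, Finsupp.mem_support_iff.mpr (heq ▸ hh)⟩
        have hcard : δ.coeff.support.card < n := by
          calc δ.coeff.support.card ≤ (γ.coeff.support.erase g).card := Finset.card_le_card hsupp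
            _ < γ.coeff.support.card := Finset.card_erase_lt_of_mem hg
            _ = n := hn
        have hδspan := ih _ hcard δ hδsym rfl
        rw [hγδ]
        exact Submodule.add_mem _ hδspan
          (Submodule.smul_mem _ c (Submodule.subset_span ⟨g, rfl⟩))
  -- generators commute
  have hkk : ∀ n ∈ σ.ker, ∀ m ∈ σ.ker, w n * w m = w m * w n := by
    intro n hn m hm
    have e1 := hab n hn m hm
    have e2 := hab n hn (st m) (hker_st m hm)
    have e3 := hab (st n) (hker_st n hn) m hm
    have e4 := hab (st n) (hker_st n hn) (st m) (hker_st m hm)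
    simp only [hw]
    rw [add_mul, mul_add, mul_add, add_mul, mul_add, mul_add]
    simp only [MonoidAlgebra.single_mul_single, one_mul, mul_one]
    rw [← e1, ← e2, ← e3, ← e4, mul_comm (cf m) (cf n)]
    abel
  have hmixed : ∀ n ∈ σ.ker, ∀ x : G, x ∉ σ.ker → w n * w x = w x * w n := by
    intro n hn x hx
    have hstx : st x = s * x := hout x hx
    have hxfix : st x ≠ x := by
      rw [hstx]; exact fun e => hs1 (mul_eq_right.mp e)
    have hcfx : cf x = -1 := by
      simp only [hcf]; rw [if_neg hxfix]; exact hσRx x hx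
    by_cases hfix : st n = n
    · have hcfn : cf n = 0 := by simp only [hcf]; rw [if_pos hfix]
      have e1 : x * n = n * x := by
        have := hxn' n hn x hx; rwa [hfix] at this
      have e3 : n * (s * x) = s * (n * x) := by rw [← mul_assoc, ← hcen n, mul_assoc]
      have e5 : (s * x) * n = s * (n * x) := by rw [mul_assoc, e1]
      simp only [hw, hstx, hcfx, hcfn]
      rw [add_mul, mul_add, mul_add, add_mul, mul_add, mul_add]
      simp only [MonoidAlgebra.single_mul_single, one_mul, mul_one, mul_zero, zero_mul,
        mul_neg, neg_mul, neg_neg, MonoidAlgebra.single_zero, neg_zero, add_zero, zero_add]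
      rw [e1, e3, e5]
    · have hcfn : cf n = 1 := by
        simp only [hcf]; rw [if_neg hfix]; exact hσR1 n hn
      have e1 : x * n = st n * x := hxn' n hn x hx
      have e2 : x * st n = n * x := hxn n hn x hx
      have e3 : n * (s * x) = s * (n * x) := by rw [← mul_assoc, ← hcen n, mul_assoc]
      have e4 : st n * (s * x) = s * (st n * x) := by
        rw [← mul_assoc, ← hcen (st n), mul_assoc]
      have e5 : (s * x) * n = s * (st n * x) := by rw [mul_assoc, e1]
      have e6 : (s * x) * st n = s * (n * x) := by rw [mul_assoc, e2]
      simp only [hw, hstx, hcfx, hcfn]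
      rw [add_mul, mul_add, mul_add, add_mul, mul_add, mul_add]
      simp only [MonoidAlgebra.single_mul_single, one_mul, mul_one, mul_neg, neg_mul,
        neg_neg]
      rw [e1, e2, e3, e4, e5, e6]
      abel
  have hxx : ∀ x : G, x ∉ σ.ker → ∀ y : G, y ∉ σ.ker → w x * w y = w y * w x := by
    intro x hx y hy
    have hstx : st x = s * x := hout x hx
    have hsty : st y = s * y := hout y hy
    have hxfix : st x ≠ x := by
      rw [hstx]; exact fun e => hs1 (mul_eq_right.mp e)
    have hyfix : st y ≠ y := by
      rw [hsty]; exact fun e => hs1 (mul_eq_right.mp e)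
    have hcfx : cf x = -1 := by
      simp only [hcf]; rw [if_neg hxfix]; exact hσRx x hx
    have hcfy : cf y = -1 := by
      simp only [hcf]; rw [if_neg hyfix]; exact hσRx y hy
    have ex1 : x * (s * y) = s * (x * y) := by rw [← mul_assoc, ← hcen x, mul_assoc]
    have ex2 : (s * x) * y = s * (x * y) := mul_assoc s x y
    have ex3 : (s * x) * (s * y) = x * y := by
      rw [mul_assoc, ex1, ← mul_assoc, hs2, one_mul]
    have ey1 : y * (s * x) = s * (y * x) := by rw [← mul_assoc, ← hcen y, mul_assoc]
    have ey2 : (s * y) * x = s * (y * x) := mul_assoc s y x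
    have ey3 : (s * y) * (s * x) = y * x := by
      rw [mul_assoc, ey1, ← mul_assoc, hs2, one_mul]
    simp only [hw, hstx, hsty, hcfx, hcfy]
    rw [add_mul, mul_add, mul_add, add_mul, mul_add, mul_add]
    simp only [MonoidAlgebra.single_mul_single, one_mul, mul_one, mul_neg, neg_mul,
      neg_neg]
    rw [ex1, ex2, ex3, ey1, ey2, ey3]
    rcases huniq y x with hcml | hcml
    · rw [(commutatorElement_eq_one_iff_mul_comm.mp hcml : y * x = x * y)]
    · have e : y * x = s * (x * y) := by
        have h' : y * x = ⁅y, x⁆ * (x * y) := by group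
        rw [h', hcml]
      rw [e, show s * (s * (x * y)) = x * y by rw [← mul_assoc, hs2, one_mul]]
      have hL : ∀ p q : G, MonoidAlgebra.single p (1 : R) + MonoidAlgebra.single q (-1 : R)
          + (MonoidAlgebra.single q (-1 : R) + MonoidAlgebra.single p (1 : R))
          = MonoidAlgebra.single p ((1 : R) + 1) + MonoidAlgebra.single q ((-1 : R) + -1) := by
        intro p q
        rw [MonoidAlgebra.single_add, MonoidAlgebra.single_add]
        abel
      rw [hL (x * y) (s * (x * y)), hL (s * (x * y)) (x * y),
        show (1 : R) + 1 = -1 + -1 by linear_combination h4]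
      abel
  have hwcomm : ∀ g h : G, w g * w h = w h * w g := by
    intro g h
    by_cases hgk : g ∈ σ.ker <;> by_cases hhk : h ∈ σ.ker
    · exact hkk g hgk h hhk
    · exact hmixed g hgk h hhk
    · exact (hmixed h hhk g hgk).symm
    · exact hxx g hgk h hhk
  -- conclude by span induction
  have hmem : ∀ u ∈ Submodule.span R (Set.range w),
      ∀ v ∈ Submodule.span R (Set.range w), u * v = v * u := by
    intro u hu
    induction hu using Submodule.span_induction with
    | mem u hu =>
      intro v hv
      induction hv using Submodule.span_induction with
      | mem v hv =>
        obtain ⟨gu, rfl⟩ := hu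
        obtain ⟨gv, rfl⟩ := hv
        exact hwcomm gu gv
      | zero => simp
      | add v₁ v₂ _ _ ih1 ih2 => rw [mul_add, add_mul, ih1, ih2]
      | smul a v _ ih => rw [mul_smul_comm, smul_mul_assoc, ih]
    | zero => intro v hv; simp
    | add u₁ u₂ _ _ ih1 ih2 => intro v hv; rw [add_mul, mul_add, ih1 v hv, ih2 v hv]
    | smul a u _ ih => intro v hv; rw [smul_mul_assoc, mul_smul_comm, ih v hv]
  exact hmem α (hspan α hα) β (hspan β hβ)
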